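/- Let A ∈ ℝ^{d×d} (d ≥ 1) be symmetric with block structure S_1,…,S_p, and let 1 ≤ k ≤ d. Then there exists x* ∈ ℝ^d with ‖x*‖₂ = 1, ‖x*‖₀ ≤ k, and supp(x*) ⊆ S_i for some i ∈ [p], such that (x*)ᵀAx* ≥ yᵀAy for every y ∈ ℝ^d with ‖y‖₂ = 1 and ‖y‖₀ ≤ k. In other words, the Sparse PCA problem for a block-structured matrix admits an optimal solution whose support is contained in a single block. -/
import Mathlib


open Matrix BigOperators

/-- Number of nonzero coordinates of a vector (the "ℓ₀ norm"). -/
noncomputable def sparsity {d : ℕ} (x : Fin d → ℝ) : ℕ := {i : Fin d | x i ≠ 0}.ncard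

/-- The quadratic form xᵀ M x. -/
noncomputable def quadForm {d : ℕ} (M : Matrix (Fin d) (Fin d) ℝ) (x : Fin d → ℝ) : ℝ :=
  x ⬝ᵥ M.mulVec x

lemma quadForm_eq {d : ℕ} (A : Matrix (Fin d) (Fin d) ℝ) (x : Fin d → ℝ) :
    quadForm A x = ∑ a, ∑ b, x a * (A a b * x b) := by
  unfold quadForm Matrix.mulVec dotProduct
  simp [Finset.mul_sum]

lemma quadForm_smul {d : ℕ} (A : Matrix (Fin d) (Fin d) ℝ) (t : ℝ) (v : Fin d → ℝ) :
    quadForm A (fun j => t * v j) = t ^ 2 * quadForm A v := by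
  rw [quadForm_eq, quadForm_eq, Finset.mul_sum]
  refine Finset.sum_congr rfl fun a _ => ?_
  rw [Finset.mul_sum]
  refine Finset.sum_congr rfl fun b _ => ?_
  ring

/-- The Sparse PCA problem for a block-structured symmetric matrix admits an optimal solution
whose support is contained in a single block. -/
theorem stmt_4 {d p k : ℕ} (hd : 1 ≤ d) (hp : 1 ≤ p) (hk1 : 1 ≤ k) (hkd : k ≤ d)
    (A : Matrix (Fin d) (Fin d) ℝ) (hA : A.IsSymm)
    (S : Fin p → Set (Fin d))
    (hne : ∀ i, (S i).Nonempty)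
    (hdisj : ∀ i j, i ≠ j → Disjoint (S i) (S j))
    (hcover : (⋃ i, S i) = Set.univ)
    (hblock : ∀ i j : Fin p, i ≠ j → ∀ a ∈ S i, ∀ b ∈ S j, A a b = 0) :
    ∃ xstar : Fin d → ℝ, ∑ i, xstar i ^ 2 = 1 ∧ sparsity xstar ≤ k ∧
      (∃ i : Fin p, {j | xstar j ≠ 0} ⊆ S i) ∧
      ∀ y : Fin d → ℝ, ∑ i, y i ^ 2 = 1 → sparsity y ≤ k →
        quadForm A y ≤ quadForm A xstar := by
  classical
  set K : Set (Fin d → ℝ) := {y | ∑ i, y i ^ 2 = 1 ∧ sparsity y ≤ k} with hKdef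
  -- continuity of the quadratic form
  have hcont : Continuous (quadForm A) := by
    have heq : (quadForm A) = fun y : Fin d → ℝ => ∑ a, ∑ b, y a * (A a b * y b) := by
      funext y; exact quadForm_eq A y
    rw [heq]
    exact continuous_finset_sum _ fun a _ =>
      continuous_finset_sum _ fun b _ =>
        (continuous_apply a).mul (continuous_const.mul (continuous_apply b))
  -- K is closed
  have hclosed : IsClosed K := by
    have h1 : IsClosed {y : Fin d → ℝ | ∑ i, y i ^ 2 = 1} := by
      refine isClosed_eq ?_ continuous_const
      exact continuous_finset_sum _ fun i _ => (continuous_apply i).pow 2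
    have h2 : IsClosed {y : Fin d → ℝ | sparsity y ≤ k} := by
      have hset : {y : Fin d → ℝ | sparsity y ≤ k}
          = ⋃ T ∈ {T : Finset (Fin d) | T.card ≤ k},
              {y : Fin d → ℝ | ∀ i ∉ T, y i = 0} := by
        ext y
        simp only [Set.mem_setOf_eq, Set.mem_iUnion]
        constructor
        · intro hy
          refine ⟨{i | y i ≠ 0}.toFinset, ?_, ?_⟩
          · simpa [sparsity, Set.ncard_eq_toFinset_card'] using hy
          · intro i hi
            by_contra h
            exact hi (Set.mem_toFinset.mpr h)
        · rintro ⟨T, hT, hsupp⟩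
          calc sparsity y ≤ T.card := by
                rw [← Set.ncard_coe_finset T]
                refine Set.ncard_le_ncard (fun i hi => ?_) (Set.toFinite _)
                by_contra h
                exact hi (hsupp i h)
            _ ≤ k := hT
      rw [hset]
      refine Set.Finite.isClosed_biUnion (Set.toFinite _) fun T _ => ?_
      have : {y : Fin d → ℝ | ∀ i ∉ T, y i = 0}
          = ⋂ i ∈ ((Tᶜ : Finset (Fin d)) : Set (Fin d)), {y : Fin d → ℝ | y i = 0} := by
        ext y; simp [Finset.mem_compl]
      rw [this]
      exact isClosed_biInter fun i _ => isClosed_eq (continuous_apply i) continuous_const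
    have : K = {y : Fin d → ℝ | ∑ i, y i ^ 2 = 1} ∩ {y : Fin d → ℝ | sparsity y ≤ k} := rfl
    rw [this]
    exact h1.inter h2
  -- K is bounded
  have hsub : K ⊆ Metric.closedBall 0 1 := by
    intro y hy
    rw [Metric.mem_closedBall, dist_zero_right]
    rw [pi_norm_le_iff_of_nonneg zero_le_one]
    intro i
    have h1 : y i ^ 2 ≤ 1 := by
      rw [← hy.1]
      exact Finset.single_le_sum (fun j _ => sq_nonneg (y j)) (Finset.mem_univ i)
    have : ‖y i‖ = |y i| := rfl
    rw [this]
    nlinarith [sq_abs (y i), abs_nonneg (y i)]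
  have hKc : IsCompact K :=
    IsCompact.of_isClosed_subset (isCompact_closedBall 0 1) hclosed hsub
  -- K is nonempty
  have hKne : K.Nonempty := by
    refine ⟨fun j => if j = ⟨0, hd⟩ then (1:ℝ) else 0, ?_, ?_⟩
    · have h : ∀ j : Fin d, (if j = (⟨0, hd⟩ : Fin d) then (1:ℝ) else 0) ^ 2
          = if j = ⟨0, hd⟩ then 1 else 0 := by
        intro j; split <;> norm_num
      rw [Finset.sum_congr rfl fun j _ => h j]
      simp
    · have hsup : {j : Fin d | (if j = (⟨0, hd⟩ : Fin d) then (1:ℝ) else 0) ≠ 0}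
          = {(⟨0, hd⟩ : Fin d)} := by
        ext j
        simp only [Set.mem_setOf_eq, Set.mem_singleton_iff]
        split <;> simp_all
      show sparsity _ ≤ k
      rw [sparsity, hsup, Set.ncard_singleton]
      exact hk1
  -- maximizer
  obtain ⟨x, hxK, hmax⟩ := hKc.exists_isMaxOn hKne hcont.continuousOn
  -- block membership function
  have hexblk : ∀ j : Fin d, ∃ i, j ∈ S i := by
    intro j
    have : j ∈ ⋃ i, S i := by rw [hcover]; exact Set.mem_univ j
    exact Set.mem_iUnion.mp this
  choose blk hblk using hexblk
  have huniq : ∀ (j : Fin d) (i : Fin p), j ∈ S i → i = blk j := by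
    intro j i hij
    by_contra h
    exact Set.disjoint_left.mp (hdisj i (blk j) h) hij (hblk j)
  -- block parts of x
  set xpart : Fin p → Fin d → ℝ := fun i => (S i).indicator x with hxpart
  set c : Fin p → ℝ := fun i => ∑ j, (xpart i j) ^ 2 with hc
  set q : Fin p → ℝ := fun i => quadForm A (xpart i) with hq
  have hcnn : ∀ i, 0 ≤ c i := fun i => Finset.sum_nonneg fun j _ => sq_nonneg _
  -- sum of the c i is 1
  have hcsum : ∑ i, c i = 1 := by
    rw [show ∑ i, c i = ∑ i, ∑ j, (xpart i j) ^ 2 from rfl, Finset.sum_comm]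
    rw [← hxK.1]
    refine Finset.sum_congr rfl fun j _ => ?_
    have hstep : ∑ i, (xpart i j) ^ 2 = (xpart (blk j) j) ^ 2 := by
      refine Finset.sum_eq_single (blk j) ?_ ?_
      · intro i _ hi
        have : j ∉ S i := fun hj => hi (huniq j i hj)
        simp [hxpart, Set.indicator_of_notMem this]
      · intro h; exact absurd (Finset.mem_univ _) h
    rw [hstep, show xpart (blk j) j = x j from Set.indicator_of_mem (hblk j) x]
  -- sum of the q i is quadForm A x
  have hptwise : ∀ a b : Fin d,
      (∑ i, xpart i a * (A a b * xpart i b)) = x a * (A a b * x b) := by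
    intro a b
    by_cases h : blk a = blk b
    · have hstep : ∑ i, xpart i a * (A a b * xpart i b)
          = xpart (blk a) a * (A a b * xpart (blk a) b) := by
        refine Finset.sum_eq_single (blk a) ?_ ?_
        · intro i _ hi
          have : a ∉ S i := fun ha => hi (huniq a i ha)
          simp [hxpart, Set.indicator_of_notMem this]
        · intro hm; exact absurd (Finset.mem_univ _) hm
      have ha : xpart (blk a) a = x a := Set.indicator_of_mem (hblk a) x
      have hb : xpart (blk a) b = x b := by
        rw [h]; exact Set.indicator_of_mem (hblk b) x
      rw [hstep, ha, hb]
    · have hA0 : A a b = 0 := hblock (blk a) (blk b) h a (hblk a) b (hblk b)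
      simp [hA0]
  have hqsum : ∑ i, q i = quadForm A x := by
    have : ∑ i, q i = ∑ i, ∑ a, ∑ b, xpart i a * (A a b * xpart i b) :=
      Finset.sum_congr rfl fun i _ => quadForm_eq A (xpart i)
    rw [this, Finset.sum_comm]
    rw [quadForm_eq A x]
    refine Finset.sum_congr rfl fun a _ => ?_
    rw [Finset.sum_comm]
    exact Finset.sum_congr rfl fun b _ => hptwise a b
  -- if c i = 0 then q i = 0
  have hczero : ∀ i, c i = 0 → q i = 0 := by
    intro i hci
    have hz : ∀ j, xpart i j = 0 := by
      intro j
      have := (Finset.sum_eq_zero_iff_of_nonneg (fun j _ => sq_nonneg (xpart i j))).mp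
        hci j (Finset.mem_univ j)
      exact pow_eq_zero_iff (two_ne_zero) |>.mp this
    have hqi : q i = quadForm A (xpart i) := rfl
    rw [hqi, quadForm_eq]
    refine Finset.sum_eq_zero fun a _ => Finset.sum_eq_zero fun b _ => ?_
    rw [hz a]; ring
  -- good block exists
  set M : ℝ := quadForm A x with hM
  have hex : ∃ i, 0 < c i ∧ M * c i ≤ q i := by
    by_contra hcon
    push_neg at hcon
    have hle : ∀ i ∈ Finset.univ, q i ≤ M * c i := by
      intro i _
      rcases (hcnn i).lt_or_eq with h | h
      · exact (hcon i h).le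
      · rw [hczero i h.symm, ← h]; simp
    have hexpos : ∃ i, 0 < c i := by
      by_contra hneg
      push_neg at hneg
      have : ∑ i, c i = 0 :=
        le_antisymm (Finset.sum_nonpos fun i _ => hneg i) (Finset.sum_nonneg fun i _ => hcnn i)
      rw [hcsum] at this
      norm_num at this
    obtain ⟨i0, hi0⟩ := hexpos
    have hlt : ∑ i, q i < ∑ i, M * c i :=
      Finset.sum_lt_sum hle ⟨i0, Finset.mem_univ _, hcon i0 hi0⟩
    rw [hqsum, ← Finset.mul_sum, hcsum, mul_one] at hlt
    exact lt_irrefl _ hlt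
  obtain ⟨i, hci, hqi⟩ := hex
  -- the normalized block part
  set t : ℝ := (Real.sqrt (c i))⁻¹ with ht
  have ht2 : t ^ 2 = (c i)⁻¹ := by
    rw [ht, inv_pow, Real.sq_sqrt (hcnn i)]
  refine ⟨fun j => t * xpart i j, ?_, ?_, ⟨i, ?_⟩, ?_⟩
  · have : ∑ j, (t * xpart i j) ^ 2 = t ^ 2 * ∑ j, (xpart i j) ^ 2 := by
      rw [Finset.mul_sum]
      exact Finset.sum_congr rfl fun j _ => by ring
    rw [this, ht2]
    exact inv_mul_cancel₀ hci.ne'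
  · have hsupp : {j | t * xpart i j ≠ 0} ⊆ {j | x j ≠ 0} := by
      intro j hj
      have hxp : xpart i j ≠ 0 := by
        intro h
        exact hj (by simp [h])
      have := Set.indicator_apply_ne_zero.mp hxp
      exact this.2
    calc sparsity (fun j => t * xpart i j) ≤ sparsity x :=
          Set.ncard_le_ncard hsupp (Set.toFinite _)
      _ ≤ k := hxK.2
  · intro j hj
    have hxp : xpart i j ≠ 0 := by
      intro h
      exact hj (by simp [h])
    exact (Set.indicator_apply_ne_zero.mp hxp).1
  · intro y hy1 hy2
    have hyK : y ∈ K := ⟨hy1, hy2⟩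
    have h1 : quadForm A y ≤ M := hmax hyK
    have h2 : M ≤ quadForm A (fun j => t * xpart i j) := by
      rw [quadForm_smul, ht2]
      have : M = (c i)⁻¹ * (M * c i) := by
        field_simp
      rw [this]
      exact mul_le_mul_of_nonneg_left hqi (inv_nonneg.mpr (hcnn i))
    exact h1.trans h2
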